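/- Let 0<q<∞ and let φ:(0,∞)→[0,∞) satisfy 0 < sup_{t>0} φ(t)·min(t^{−n/q},1) < ∞. Then there exist a function φ* ∈ G_q and a constant C ≥ 1 such that for every measurable f:ℝⁿ→ℂ, C^{−1}‖f‖_{M^{φ*}_q} ≤ ‖f‖_{M^φ_q} ≤ C‖f‖_{M^{φ*}_q}; in particular M^φ_q(ℝⁿ) = M^{φ*}_q(ℝⁿ) with equivalence of norms. -/

import Mathlib

open MeasureTheory Set
open scoped ENNReal NNReal

/-- The generalized Morrey norm `‖f‖_{M^φ_q}` on `ℝⁿ` (cubes realized as closed balls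
for the sup metric on `Fin n → ℝ`). -/
noncomputable def morreyNorm (n : ℕ) (q : ℝ) (φ : ℝ → ℝ)
    (f : (Fin n → ℝ) → ℂ) : ℝ≥0∞ :=
  ⨆ (x : Fin n → ℝ) (r : ℝ) (_ : 0 < r),
    ENNReal.ofReal (φ r) *
      ((volume (Metric.closedBall x r))⁻¹ *
        ∫⁻ y in Metric.closedBall x r, (‖f y‖₊ : ℝ≥0∞) ^ q) ^ (1 / q)

/-- The class `G_q`: nondecreasing functions `φ : (0,∞) → (0,∞)` such that
`t ↦ t^{-n/q} φ(t)` is nonincreasing on `(0,∞)`. -/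
def IsGq (n : ℕ) (q : ℝ) (φ : ℝ → ℝ) : Prop :=
  (∀ t, 0 < t → 0 < φ t) ∧
  (∀ s t, 0 < s → s ≤ t → φ s ≤ φ t) ∧
  (∀ s t, 0 < s → s ≤ t → t ^ (-((n : ℝ) / q)) * φ t ≤ s ^ (-((n : ℝ) / q)) * φ s)


noncomputable def mAvg (n : ℕ) (q : ℝ) (f : (Fin n → ℝ) → ℂ) (x : Fin n → ℝ) (r : ℝ) : ℝ≥0∞ :=
  (volume (Metric.closedBall x r))⁻¹ *
    ∫⁻ y in Metric.closedBall x r, (‖f y‖₊ : ℝ≥0∞) ^ q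

noncomputable def mSup (n : ℕ) (q : ℝ) (f : (Fin n → ℝ) → ℂ) (r : ℝ) : ℝ≥0∞ :=
  ⨆ x, mAvg n q f x r

lemma volume_cube (n : ℕ) (x : Fin n → ℝ) {r : ℝ} (hr : 0 ≤ r) :
    volume (Metric.closedBall x r) = ENNReal.ofReal ((2 * r) ^ n) := by
  rw [Real.volume_pi_closedBall x hr, Fintype.card_fin]

lemma ennreal_iSup_rpow {ι : Sort*} (g : ι → ℝ≥0∞) {c : ℝ} (hc : 0 < c) :
    (⨆ i, g i) ^ c = ⨆ i, g i ^ c := by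
  apply le_antisymm
  · have h1 : (⨆ i, g i) ≤ (⨆ i, g i ^ c) ^ (1 / c) := by
      refine iSup_le fun i => ?_
      have : g i = (g i ^ c) ^ (1 / c) := by
        rw [← ENNReal.rpow_mul, mul_one_div, div_self hc.ne', ENNReal.rpow_one]
      rw [this]
      exact ENNReal.rpow_le_rpow (le_iSup (fun i => g i ^ c) i) (by positivity)
    calc (⨆ i, g i) ^ c ≤ ((⨆ i, g i ^ c) ^ (1 / c)) ^ c :=
          ENNReal.rpow_le_rpow h1 hc.le
      _ = ⨆ i, g i ^ c := by
          rw [← ENNReal.rpow_mul, one_div, inv_mul_cancel₀ hc.ne', ENNReal.rpow_one]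
  · exact iSup_le fun i => ENNReal.rpow_le_rpow (le_iSup g i) hc.le

lemma mAvg_le_of_le (n : ℕ) (q : ℝ) (f : (Fin n → ℝ) → ℂ) (x : Fin n → ℝ)
    {r s : ℝ} (hr : 0 < r) (hrs : r ≤ s) :
    mAvg n q f x r ≤ ENNReal.ofReal ((s / r) ^ n) * mAvg n q f x s := by
  have hs : 0 < s := hr.trans_le hrs
  have hI : (∫⁻ y in Metric.closedBall x r, (‖f y‖₊ : ℝ≥0∞) ^ q) ≤
      ∫⁻ y in Metric.closedBall x s, (‖f y‖₊ : ℝ≥0∞) ^ q :=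
    lintegral_mono_set (Metric.closedBall_subset_closedBall hrs)
  have hkey : (volume (Metric.closedBall x r))⁻¹ =
      ENNReal.ofReal ((s / r) ^ n) * (volume (Metric.closedBall x s))⁻¹ := by
    rw [volume_cube n x hr.le, volume_cube n x hs.le,
      ← ENNReal.ofReal_inv_of_pos (by positivity),
      ← ENNReal.ofReal_inv_of_pos (by positivity),
      ← ENNReal.ofReal_mul (by positivity)]
    congr 1
    field_simp
    rw [← mul_pow]; congr 1; field_simp
  calc mAvg n q f x r ≤ (volume (Metric.closedBall x r))⁻¹ *
        ∫⁻ y in Metric.closedBall x s, (‖f y‖₊ : ℝ≥0∞) ^ q :=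
        mul_le_mul_right hI _
    _ = ENNReal.ofReal ((s / r) ^ n) * mAvg n q f x s := by
        rw [hkey, mAvg, mul_assoc]


lemma cube_subset_iUnion (n : ℕ) (x : Fin n → ℝ) {r s : ℝ} (hr : 0 < r) (hrs : r ≤ s) :
    Metric.closedBall x s ⊆ ⋃ i : Fin n → Fin ⌈s / r⌉₊,
      Metric.closedBall (fun j => (x j - s) + (2 * (i j : ℝ) + 1) * r) r := by
  set N := ⌈s / r⌉₊ with hN
  have hs : 0 < s := hr.trans_le hrs
  have hsr1 : (1 : ℝ) ≤ s / r := (one_le_div hr).mpr hrs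
  have hN1 : 1 ≤ N := Nat.one_le_ceil_iff.mpr (by linarith)
  intro y hy
  rw [Metric.mem_closedBall, dist_pi_le_iff hs.le] at hy
  -- choose indices
  have key : ∀ j, ∃ k : Fin N, |y j - ((x j - s) + (2 * (k : ℝ) + 1) * r)| ≤ r := by
    intro j
    have hd0 : 0 ≤ y j - (x j - s) := by
      have := hy j; rw [Real.dist_eq, abs_le] at this; linarith [this.1, this.2]
    have hd2 : y j - (x j - s) ≤ 2 * s := by
      have := hy j; rw [Real.dist_eq, abs_le] at this; linarith [this.1, this.2]
    set d := y j - (x j - s) with hdd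
    set k₀ := ⌊d / (2 * r)⌋₊ with hk₀
    set k := min k₀ (N - 1) with hk
    have hkN : k < N := lt_of_le_of_lt (min_le_right _ _) (by omega)
    refine ⟨⟨k, hkN⟩, ?_⟩
    have hlow : 2 * (k : ℝ) * r ≤ d := by
      have h1 : (k : ℝ) ≤ k₀ := by exact_mod_cast min_le_left _ _
      have h2 : (k₀ : ℝ) ≤ d / (2 * r) := Nat.floor_le (by positivity)
      have := (le_div_iff₀ (by positivity : (0:ℝ) < 2 * r)).mp (h1.trans h2)
      linarith
    have hhigh : d ≤ 2 * ((k : ℝ) + 1) * r := by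
      rcases le_or_gt k₀ (N - 1) with h | h
      · have hkk : k = k₀ := min_eq_left h
        have h2 : d / (2 * r) < k₀ + 1 := Nat.lt_floor_add_one _
        rw [hkk]
        have := (div_lt_iff₀ (by positivity : (0:ℝ) < 2 * r)).mp h2
        push_cast
        nlinarith
      · have hkk : k = N - 1 := min_eq_right h.le
        have hNd : s ≤ (N : ℝ) * r := by
          have := Nat.le_ceil (s / r)
          rw [← hN] at this
          calc s = (s / r) * r := by field_simp
            _ ≤ (N : ℝ) * r := by nlinarith
        have hcast : (k : ℝ) + 1 = (N : ℝ) := by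
          rw [hkk]; push_cast [Nat.cast_sub hN1]; ring
        rw [hcast] at *
        nlinarith
      
    rw [abs_le]; constructor <;> simp only [hdd] at hlow hhigh <;> nlinarith
  choose i hi using key
  refine mem_iUnion.mpr ⟨i, ?_⟩
  rw [Metric.mem_closedBall, dist_pi_le_iff hr.le]
  intro j
  rw [Real.dist_eq]
  exact hi j

lemma mAvg_le_doubling (n : ℕ) (q : ℝ) (f : (Fin n → ℝ) → ℂ) (x : Fin n → ℝ)
    {r s : ℝ} (hr : 0 < r) (hrs : r ≤ s) :
    mAvg n q f x s ≤ ENNReal.ofReal (2 ^ n) * mSup n q f r := by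
  have hs : 0 < s := hr.trans_le hrs
  set N := ⌈s / r⌉₊ with hN
  set g : (Fin n → ℝ) → ℝ≥0∞ := fun y => (‖f y‖₊ : ℝ≥0∞) ^ q with hg
  set c : (Fin n → Fin N) → (Fin n → ℝ) :=
    fun i j => (x j - s) + (2 * (i j : ℝ) + 1) * r with hc
  have hvol_ne_zero : ENNReal.ofReal ((2 * r) ^ n) ≠ 0 := by
    simp [ENNReal.ofReal_eq_zero]; positivity
  have hvol_ne_top : ENNReal.ofReal ((2 * r) ^ n) ≠ ⊤ := ENNReal.ofReal_ne_top
  have hIs : (∫⁻ y in Metric.closedBall x s, g y) ≤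
      (Fintype.card (Fin n → Fin N) : ℝ≥0∞) * (ENNReal.ofReal ((2 * r) ^ n) * mSup n q f r) := by
    calc (∫⁻ y in Metric.closedBall x s, g y)
        ≤ ∫⁻ y in ⋃ i : Fin n → Fin N, Metric.closedBall (c i) r, g y :=
          lintegral_mono_set (cube_subset_iUnion n x hr hrs)
      _ ≤ ∑' i : Fin n → Fin N, ∫⁻ y in Metric.closedBall (c i) r, g y :=
          lintegral_iUnion_le _ _
      _ ≤ ∑' i : Fin n → Fin N, ENNReal.ofReal ((2 * r) ^ n) * mSup n q f r := by
          refine ENNReal.tsum_le_tsum fun i => ?_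
          have : (∫⁻ y in Metric.closedBall (c i) r, g y) =
              ENNReal.ofReal ((2 * r) ^ n) * mAvg n q f (c i) r := by
            rw [mAvg, ← mul_assoc, ← volume_cube n (c i) hr.le,
              ENNReal.mul_inv_cancel (by rw [volume_cube n (c i) hr.le]; exact hvol_ne_zero)
                (by rw [volume_cube n (c i) hr.le]; exact hvol_ne_top), one_mul]
          rw [this]
          exact mul_le_mul_right (le_iSup (fun x' => mAvg n q f x' r) (c i)) _
      _ = (Fintype.card (Fin n → Fin N) : ℝ≥0∞) * (ENNReal.ofReal ((2 * r) ^ n) * mSup n q f r) := by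
          rw [tsum_fintype, Finset.sum_const, Finset.card_univ, nsmul_eq_mul]
  have hcard : (Fintype.card (Fin n → Fin N) : ℝ≥0∞) = ENNReal.ofReal ((N : ℝ) ^ n) := by
    rw [Fintype.card_fun, Fintype.card_fin, Fintype.card_fin]
    rw [← ENNReal.ofReal_natCast]
    push_cast
    ring_nf
  have hratio : (ENNReal.ofReal ((2 * s) ^ n))⁻¹ *
      (ENNReal.ofReal ((N : ℝ) ^ n) * ENNReal.ofReal ((2 * r) ^ n)) ≤ ENNReal.ofReal (2 ^ n) := by
    rw [← ENNReal.ofReal_inv_of_pos (by positivity), ← ENNReal.ofReal_mul (by positivity),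
      ← ENNReal.ofReal_mul (by positivity)]
    apply ENNReal.ofReal_le_ofReal
    have hNle : (N : ℝ) * (2 * r) ≤ 4 * s := by
      have h1 : (N : ℝ) < s / r + 1 := by
        have := Nat.ceil_lt_add_one (by positivity : (0:ℝ) ≤ s / r)
        exact_mod_cast this
      have h2 : s / r + 1 ≤ 2 * (s / r) := by
        have : (1:ℝ) ≤ s / r := (one_le_div hr).mpr hrs
        linarith
      have h3 : (N : ℝ) ≤ 2 * (s / r) := le_of_lt (h1.trans_le h2)
      calc (N : ℝ) * (2 * r) ≤ (2 * (s / r)) * (2 * r) := by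
            apply mul_le_mul_of_nonneg_right h3; positivity
        _ = 4 * s := by field_simp; ring
    calc ((2 * s) ^ n)⁻¹ * ((N : ℝ) ^ n * (2 * r) ^ n)
        = ((N : ℝ) * (2 * r)) ^ n / (2 * s) ^ n := by rw [mul_pow]; ring
      _ ≤ (4 * s) ^ n / (2 * s) ^ n := by
          apply div_le_div_of_nonneg_right ?_ (by positivity)
          · exact pow_le_pow_left₀ (by positivity) hNle n
      _ = 2 ^ n := by
          rw [div_eq_iff (by positivity)]
          rw [← mul_pow]; ring_nf
  calc mAvg n q f x s = (ENNReal.ofReal ((2 * s) ^ n))⁻¹ * ∫⁻ y in Metric.closedBall x s, g y := by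
        rw [mAvg, volume_cube n x hs.le]
    _ ≤ (ENNReal.ofReal ((2 * s) ^ n))⁻¹ *
        ((Fintype.card (Fin n → Fin N) : ℝ≥0∞) * (ENNReal.ofReal ((2 * r) ^ n) * mSup n q f r)) :=
        mul_le_mul_right hIs _
    _ = ((ENNReal.ofReal ((2 * s) ^ n))⁻¹ *
        (ENNReal.ofReal ((N : ℝ) ^ n) * ENNReal.ofReal ((2 * r) ^ n))) * mSup n q f r := by
        rw [hcard]; ring
    _ ≤ ENNReal.ofReal (2 ^ n) * mSup n q f r := mul_le_mul_left hratio _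

lemma morreyNorm_eq (n : ℕ) (q : ℝ) (φ : ℝ → ℝ) (f : (Fin n → ℝ) → ℂ) :
    morreyNorm n q φ f = ⨆ (x : Fin n → ℝ) (r : ℝ) (_ : 0 < r),
      ENNReal.ofReal (φ r) * mAvg n q f x r ^ (1 / q) := rfl

lemma le_morreyNorm (n : ℕ) (q : ℝ) (φ : ℝ → ℝ) (f : (Fin n → ℝ) → ℂ)
    (x : Fin n → ℝ) {t : ℝ} (ht : 0 < t) :
    ENNReal.ofReal (φ t) * mAvg n q f x t ^ (1 / q) ≤ morreyNorm n q φ f := by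
  rw [morreyNorm_eq]
  exact le_iSup_of_le x (le_iSup_of_le t (le_iSup_of_le ht le_rfl))

lemma mSup_le_morreyNorm (n : ℕ) (q : ℝ) (hq : 0 < q) (φ : ℝ → ℝ) (f : (Fin n → ℝ) → ℂ)
    {t : ℝ} (ht : 0 < t) :
    ENNReal.ofReal (φ t) * mSup n q f t ^ (1 / q) ≤ morreyNorm n q φ f := by
  rw [mSup, ennreal_iSup_rpow _ (one_div_pos.mpr hq), ENNReal.mul_iSup]
  exact iSup_le fun x => le_morreyNorm n q φ f x ht

theorem exists_Gq_equivalent (n : ℕ) (q : ℝ) (hq : 0 < q)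
    (φ : ℝ → ℝ) (hφ0 : ∀ t, 0 < t → 0 ≤ φ t)
    (hpos : ∃ t₀, 0 < t₀ ∧ 0 < φ t₀)
    (hbdd : ∃ C : ℝ, ∀ t, 0 < t → φ t * min (t ^ (-((n : ℝ) / q))) 1 ≤ C) :
    ∃ (ψ : ℝ → ℝ) (C : ℝ), IsGq n q ψ ∧ 1 ≤ C ∧
      ∀ f : (Fin n → ℝ) → ℂ,
        morreyNorm n q ψ f ≤ ENNReal.ofReal C * morreyNorm n q φ f ∧
        morreyNorm n q φ f ≤ ENNReal.ofReal C * morreyNorm n q ψ f := by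
  obtain ⟨t₀, ht₀, hφt₀⟩ := hpos
  obtain ⟨C₀, hC₀⟩ := hbdd
  set κ := (n : ℝ) / q with hκdef
  have hκ : 0 ≤ κ := by positivity
  have hC₀pos : 0 < C₀ :=
    lt_of_lt_of_le (mul_pos hφt₀ (lt_min (Real.rpow_pos_of_pos ht₀ _) one_pos)) (hC₀ t₀ ht₀)
  set Ψ : ℝ → ℝ≥0∞ := fun r =>
    ⨆ (t : ℝ) (_ : 0 < t), ENNReal.ofReal (φ t * min 1 ((r / t) ^ κ)) with hΨdef
  -- uniform bound
  have hbound : ∀ r t, 0 < r → 0 < t →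
      φ t * min 1 ((r / t) ^ κ) ≤ C₀ * max 1 (r ^ κ) := by
    intro r t hr ht
    have hmin0 : 0 ≤ min 1 ((r / t) ^ κ) :=
      le_min zero_le_one (Real.rpow_nonneg (by positivity) _)
    rcases le_total t 1 with h1 | h1
    · have hminl : min (t ^ (-κ)) 1 = 1 :=
        min_eq_right (Real.one_le_rpow_of_pos_of_le_one_of_nonpos ht h1 (neg_nonpos.mpr hκ))
      have hφle : φ t ≤ C₀ := by have := hC₀ t ht; rwa [hminl, mul_one] at this
      calc φ t * min 1 ((r / t) ^ κ) ≤ C₀ * 1 :=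
            mul_le_mul hφle (min_le_left _ _) hmin0 hC₀pos.le
        _ ≤ C₀ * max 1 (r ^ κ) := by
            exact mul_le_mul_of_nonneg_left (le_max_left _ _) hC₀pos.le
    · have hminl : min (t ^ (-κ)) 1 = t ^ (-κ) :=
        min_eq_left (Real.rpow_le_one_of_one_le_of_nonpos h1 (neg_nonpos.mpr hκ))
      have hinv : t ^ (-κ) * t ^ κ = 1 := by
        rw [Real.rpow_neg ht.le, inv_mul_cancel₀ (Real.rpow_pos_of_pos ht _).ne']
      have hφle : φ t ≤ C₀ * t ^ κ := by
        have h2 := hC₀ t ht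
        rw [hminl] at h2
        calc φ t = φ t * t ^ (-κ) * t ^ κ := by rw [mul_assoc, hinv, mul_one]
          _ ≤ C₀ * t ^ κ :=
            mul_le_mul_of_nonneg_right h2 (Real.rpow_pos_of_pos ht _).le
      have htr : t ^ κ * (r / t) ^ κ = r ^ κ := by
        rw [← Real.mul_rpow ht.le (by positivity)]
        congr 1
        field_simp
      calc φ t * min 1 ((r / t) ^ κ) ≤ (C₀ * t ^ κ) * min 1 ((r / t) ^ κ) :=
            mul_le_mul_of_nonneg_right hφle hmin0
        _ = C₀ * min (t ^ κ) (r ^ κ) := by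
            rw [mul_assoc, mul_min_of_nonneg _ _ (Real.rpow_pos_of_pos ht _).le, mul_one, htr]
        _ ≤ C₀ * max 1 (r ^ κ) :=
            mul_le_mul_of_nonneg_left ((min_le_right _ _).trans (le_max_right _ _)) hC₀pos.le
  have hΨtop : ∀ r, 0 < r → Ψ r ≠ ⊤ := by
    intro r hr
    refine ne_top_of_le_ne_top ENNReal.ofReal_ne_top
      (iSup₂_le fun t ht => ENNReal.ofReal_le_ofReal (hbound r t hr ht))
  have hΨpos : ∀ r, 0 < r → 0 < Ψ r := by
    intro r hr
    have hle : ENNReal.ofReal (φ t₀ * min 1 ((r / t₀) ^ κ)) ≤ Ψ r := by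
      rw [hΨdef]
      exact le_iSup₂ (f := fun (t : ℝ) (_ : 0 < t) =>
        ENNReal.ofReal (φ t * min 1 ((r / t) ^ κ))) t₀ ht₀
    refine lt_of_lt_of_le ?_ hle
    exact ENNReal.ofReal_pos.mpr
      (mul_pos hφt₀ (lt_min one_pos (Real.rpow_pos_of_pos (by positivity) _)))
  set ψ : ℝ → ℝ := fun r => (Ψ r).toReal with hψdef
  have hψofReal : ∀ r, 0 < r → ENNReal.ofReal (ψ r) = Ψ r := fun r hr =>
    ENNReal.ofReal_toReal (hΨtop r hr)
  have hψpos : ∀ t, 0 < t → 0 < ψ t := fun t ht =>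
    ENNReal.toReal_pos (hΨpos t ht).ne' (hΨtop t ht)
  have hΨmono : ∀ s t, 0 < s → s ≤ t → Ψ s ≤ Ψ t := by
    intro s t hs hst
    refine iSup₂_mono fun u hu => ENNReal.ofReal_le_ofReal ?_
    refine mul_le_mul_of_nonneg_left (min_le_min le_rfl ?_) (hφ0 u hu)
    exact Real.rpow_le_rpow (by positivity) (by gcongr) hκ
  have hψmono : ∀ s t, 0 < s → s ≤ t → ψ s ≤ ψ t := fun s t hs hst =>
    ENNReal.toReal_mono (hΨtop t (hs.trans_le hst)) (hΨmono s t hs hst)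
  have hΨid : ∀ r, 0 < r → ENNReal.ofReal (r ^ (-κ)) * Ψ r
      = ⨆ (t : ℝ) (_ : 0 < t), ENNReal.ofReal (φ t * min (r ^ (-κ)) (t ^ (-κ))) := by
    intro r hr
    rw [hΨdef]
    simp only [ENNReal.mul_iSup]
    refine iSup_congr fun t => ?_
    refine iSup_congr fun ht => ?_
    rw [← ENNReal.ofReal_mul (Real.rpow_nonneg hr.le _)]
    congr 1
    have hmm : r ^ (-κ) * min 1 ((r / t) ^ κ) = min (r ^ (-κ)) (t ^ (-κ)) := by
      rw [mul_min_of_nonneg _ _ (Real.rpow_nonneg hr.le (-κ)), mul_one]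
      congr 1
      rw [Real.div_rpow hr.le ht.le, Real.rpow_neg hr.le, Real.rpow_neg ht.le]
      field_simp
    rw [show r ^ (-κ) * (φ t * min 1 ((r / t) ^ κ))
        = φ t * (r ^ (-κ) * min 1 ((r / t) ^ κ)) by ring, hmm]
  have hΨanti : ∀ s t, 0 < s → s ≤ t →
      t ^ (-κ) * ψ t ≤ s ^ (-κ) * ψ s := by
    intro s t hs hst
    have ht : 0 < t := hs.trans_le hst
    have h1 : ENNReal.ofReal (t ^ (-κ)) * Ψ t ≤ ENNReal.ofReal (s ^ (-κ)) * Ψ s := by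
      rw [hΨid t ht, hΨid s hs]
      refine iSup₂_mono fun u hu => ENNReal.ofReal_le_ofReal ?_
      refine mul_le_mul_of_nonneg_left (min_le_min ?_ le_rfl) (hφ0 u hu)
      exact Real.rpow_le_rpow_of_nonpos hs hst (neg_nonpos.mpr hκ)
    calc t ^ (-κ) * ψ t = (ENNReal.ofReal (t ^ (-κ)) * Ψ t).toReal := by
          rw [ENNReal.toReal_mul, ENNReal.toReal_ofReal (Real.rpow_nonneg ht.le _)]
      _ ≤ (ENNReal.ofReal (s ^ (-κ)) * Ψ s).toReal := by
          refine ENNReal.toReal_mono ?_ h1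
          exact ENNReal.mul_ne_top ENNReal.ofReal_ne_top (hΨtop s hs)
      _ = s ^ (-κ) * ψ s := by
          rw [ENNReal.toReal_mul, ENNReal.toReal_ofReal (Real.rpow_nonneg hs.le _)]
  set C := (2 : ℝ) ^ κ with hCdef
  have hC1 : 1 ≤ C := by
    calc (1 : ℝ) = (2 : ℝ) ^ (0 : ℝ) := (Real.rpow_zero 2).symm
      _ ≤ (2 : ℝ) ^ κ := Real.rpow_le_rpow_of_exponent_le one_le_two hκ
  have honeC : (1 : ℝ≥0∞) ≤ ENNReal.ofReal C := ENNReal.one_le_ofReal.mpr hC1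
  refine ⟨ψ, C, ⟨hψpos, hψmono, hΨanti⟩, hC1, fun f => ⟨?_, ?_⟩⟩
  · -- morreyNorm ψ ≤ C * morreyNorm φ
    rw [morreyNorm_eq]
    refine iSup_le fun x => iSup_le fun r => iSup_le fun hr => ?_
    rw [hψofReal r hr, hΨdef]
    simp only [ENNReal.iSup_mul]
    refine iSup_le fun t => iSup_le fun ht => ?_
    rcases le_total t r with h | h
    · calc ENNReal.ofReal (φ t * min 1 ((r / t) ^ κ)) * mAvg n q f x r ^ (1 / q)
          ≤ ENNReal.ofReal (φ t) * (ENNReal.ofReal (2 ^ n) * mSup n q f t) ^ (1 / q) := by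
            refine mul_le_mul' (ENNReal.ofReal_le_ofReal ?_)
              (ENNReal.rpow_le_rpow (mAvg_le_doubling n q f x ht h) (by positivity))
            calc φ t * min 1 ((r / t) ^ κ) ≤ φ t * 1 :=
                  mul_le_mul_of_nonneg_left (min_le_left _ _) (hφ0 t ht)
              _ = φ t := mul_one _
        _ = ENNReal.ofReal C * (ENNReal.ofReal (φ t) * mSup n q f t ^ (1 / q)) := by
            rw [ENNReal.mul_rpow_of_nonneg _ _ (by positivity),
              ENNReal.ofReal_rpow_of_pos (by positivity)]
            have h2 : ((2 : ℝ) ^ n) ^ (1 / q) = C := by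
              rw [← Real.rpow_natCast 2 n, ← Real.rpow_mul (by norm_num), hCdef, hκdef,
                mul_one_div]
            rw [h2]; ring
        _ ≤ ENNReal.ofReal C * morreyNorm n q φ f :=
            mul_le_mul_right (mSup_le_morreyNorm n q hq φ f ht) _
    · have hrt1 : r / t ≤ 1 := (div_le_one ht).mpr h
      have hmin : min 1 ((r / t) ^ κ) = (r / t) ^ κ :=
        min_eq_right (Real.rpow_le_one (by positivity) hrt1 hκ)
      have hpow : ((t / r) ^ n : ℝ) ^ (1 / q) = (t / r) ^ κ := by
        rw [← Real.rpow_natCast (t / r) n, ← Real.rpow_mul (by positivity), hκdef, mul_one_div]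
      have key : ENNReal.ofReal ((r / t) ^ κ) * mAvg n q f x r ^ (1 / q)
          ≤ mAvg n q f x t ^ (1 / q) := by
        calc ENNReal.ofReal ((r / t) ^ κ) * mAvg n q f x r ^ (1 / q)
            ≤ ENNReal.ofReal ((r / t) ^ κ) *
              (ENNReal.ofReal ((t / r) ^ n) * mAvg n q f x t) ^ (1 / q) :=
              mul_le_mul_right
                (ENNReal.rpow_le_rpow (mAvg_le_of_le n q f x hr h) (by positivity)) _
          _ = (ENNReal.ofReal ((r / t) ^ κ) * ENNReal.ofReal ((t / r) ^ κ)) *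
              mAvg n q f x t ^ (1 / q) := by
              rw [ENNReal.mul_rpow_of_nonneg _ _ (by positivity),
                ENNReal.ofReal_rpow_of_pos (by positivity), hpow, mul_assoc]
          _ = mAvg n q f x t ^ (1 / q) := by
              rw [← ENNReal.ofReal_mul (by positivity),
                ← Real.mul_rpow (by positivity) (by positivity)]
              have hone : (r / t) * (t / r) = 1 := by field_simp
              rw [hone, Real.one_rpow, ENNReal.ofReal_one, one_mul]
      calc ENNReal.ofReal (φ t * min 1 ((r / t) ^ κ)) * mAvg n q f x r ^ (1 / q)
          = ENNReal.ofReal (φ t) * (ENNReal.ofReal ((r / t) ^ κ) * mAvg n q f x r ^ (1 / q)) := by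
            rw [hmin, ENNReal.ofReal_mul (hφ0 t ht), mul_assoc]
        _ ≤ ENNReal.ofReal (φ t) * mAvg n q f x t ^ (1 / q) := mul_le_mul_right key _
        _ ≤ morreyNorm n q φ f := le_morreyNorm n q φ f x ht
        _ ≤ ENNReal.ofReal C * morreyNorm n q φ f :=
            le_mul_of_one_le_left zero_le honeC
  · calc morreyNorm n q φ f ≤ morreyNorm n q ψ f := by
          rw [morreyNorm_eq, morreyNorm_eq]
          refine iSup_mono fun x => iSup_mono fun r => iSup_mono fun hr => ?_
          refine mul_le_mul_left ?_ _
          rw [hψofReal r hr]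
          have hle : ENNReal.ofReal (φ r * min 1 ((r / r) ^ κ)) ≤ Ψ r := by
            rw [hΨdef]
            exact le_iSup₂ (f := fun (t : ℝ) (_ : 0 < t) =>
              ENNReal.ofReal (φ t * min 1 ((r / t) ^ κ))) r hr
          simpa [div_self hr.ne', Real.one_rpow] using hle
      _ ≤ ENNReal.ofReal C * morreyNorm n q ψ f :=
          le_mul_of_one_le_left zero_le honeC
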